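/- arXiv:1310.0966 — 2 statements merged into one kernel-verified Lean document; each statement's English description precedes it below -/
import Mathlib

section
/- Corollary 1 (one extreme point): Let N ≥ 1, let q : Fin N → ℝ be priors with q antitone, and let v : Fin N → EuclideanSpace ℝ (Fin 3) with ‖v i‖ ≤ 1. If q i • v i = q j • v j for all i, j (the polytope P{q i • v i} is a single point), then q 0 is the greatest element of the set of success probabilities {P(M) : M an N-outcome POVM}; i.e., every POVM satisfies P(M) ≤ q 0 and this value is attained (by the POVM with M 0 = 1 and M i = 0 for i ≠ 0). -/
open Matrix Complex Finset RealInnerProductSpace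
open scoped ComplexOrder

/-- The first Pauli matrix. -/
noncomputable def pauli1 : Matrix (Fin 2) (Fin 2) ℂ := !![0, 1; 1, 0]

/-- The second Pauli matrix. -/
noncomputable def pauli2 : Matrix (Fin 2) (Fin 2) ℂ := !![0, -Complex.I; Complex.I, 0]

/-- The third Pauli matrix. -/
noncomputable def pauli3 : Matrix (Fin 2) (Fin 2) ℂ := !![1, 0; 0, -1]

/-- The operator `v ⬝ σ` for a Bloch vector `v`. -/
noncomputable def blochOp (v : EuclideanSpace ℝ (Fin 3)) : Matrix (Fin 2) (Fin 2) ℂ :=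
  (v 0 : ℂ) • pauli1 + (v 1 : ℂ) • pauli2 + (v 2 : ℂ) • pauli3

/-- The qubit state with Bloch vector `v`. -/
noncomputable def qubitState (v : EuclideanSpace ℝ (Fin 3)) : Matrix (Fin 2) (Fin 2) ℂ :=
  (1 / 2 : ℂ) • (1 + blochOp v)

/-- An `N`-outcome POVM on `ℂ^d`. -/
def IsPOVM {N d : ℕ} (M : Fin N → Matrix (Fin d) (Fin d) ℂ) : Prop :=
  (∀ i, (M i).PosSemidef) ∧ ∑ i, M i = 1

/-- Priors: a probability distribution. -/
def IsPriors {N : ℕ} (q : Fin N → ℝ) : Prop :=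
  (∀ i, 0 ≤ q i) ∧ ∑ i, q i = 1

/-- Success probability of the POVM `M` for qubit states with Bloch vectors `v`
and priors `q`. -/
noncomputable def succProb {N : ℕ} (q : Fin N → ℝ) (v : Fin N → EuclideanSpace ℝ (Fin 3))
    (M : Fin N → Matrix (Fin 2) (Fin 2) ℂ) : ℝ :=
  ∑ i, q i * (Matrix.trace (qubitState (v i) * M i)).re

/-- The geometric KKT conditions for `(q, v)` satisfied by `(r, w)`. -/
def GeomKKT {N : ℕ} (q : Fin N → ℝ) (v : Fin N → EuclideanSpace ℝ (Fin 3))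
    (r : Fin N → ℝ) (w : Fin N → EuclideanSpace ℝ (Fin 3)) : Prop :=
  (∀ i j, r i • w i - r j • w j = q j • v j - q i • v i) ∧
  (∃ p : Fin N → ℝ, (∀ i, 0 < p i) ∧ (∑ i, p i = 1) ∧ (∑ i, p i • w i = 0)) ∧
  (∀ i, ‖w i‖ = 1) ∧
  (∀ i j, r i - r j = q j - q i)


lemma blochOp_smul (c : ℝ) (v : EuclideanSpace ℝ (Fin 3)) :
    blochOp (c • v) = (c : ℂ) • blochOp v := by
  simp only [blochOp, PiLp.smul_apply, smul_eq_mul, Complex.ofReal_mul, smul_add, smul_smul]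

lemma trace_blochOp (v : EuclideanSpace ℝ (Fin 3)) : (blochOp v).trace = 0 := by
  simp [blochOp, pauli1, pauli2, pauli3, Matrix.trace_fin_two]

lemma trace_qubitState_mul (v : EuclideanSpace ℝ (Fin 3)) (M : Matrix (Fin 2) (Fin 2) ℂ) :
    (qubitState v * M).trace = (1 / 2 : ℂ) * (M.trace + (blochOp v * M).trace) := by
  simp [qubitState, smul_mul_assoc, add_mul, Matrix.trace_add, Matrix.trace_smul, smul_eq_mul,
    mul_add]

lemma trace_one' : (1 : Matrix (Fin 2) (Fin 2) ℂ).trace = 2 := by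
  simp [Matrix.trace_fin_two]

lemma trace_qubitState (v : EuclideanSpace ℝ (Fin 3)) : (qubitState v).trace = 1 := by
  rw [qubitState, Matrix.trace_smul, Matrix.trace_add, trace_one', trace_blochOp, smul_eq_mul]
  norm_num

lemma psd_trace_re_nonneg (A : Matrix (Fin 2) (Fin 2) ℂ) (h : A.PosSemidef) :
    0 ≤ A.trace.re := by
  have htr : 0 ≤ A.trace := by
    rw [Matrix.trace]
    apply Finset.sum_nonneg
    intro i _
    exact h.diag_nonneg
  exact_mod_cast (Complex.le_def.mp htr).1

lemma re_half_mul (w : ℂ) : ((1/2 : ℂ) * w).re = (1/2 : ℝ) * w.re := by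
  simp [Complex.mul_re]

/-- Corollary 1 (one extreme point): if all points `q i • v i` coincide, the
guessing probability is `q 0`, attained by `M 0 = 1`, `M i = 0` otherwise. -/
theorem corollary_one_extreme_point (N : ℕ) (hN : 0 < N)
    (q : Fin N → ℝ) (hq : IsPriors q) (hqa : Antitone q)
    (v : Fin N → EuclideanSpace ℝ (Fin 3)) (hv : ∀ i, ‖v i‖ ≤ 1)
    (hpt : ∀ i j, q i • v i = q j • v j) :
    IsGreatest {x | ∃ M : Fin N → Matrix (Fin 2) (Fin 2) ℂ, IsPOVM M ∧ succProb q v M = x}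
      (q ⟨0, hN⟩) ∧
    IsPOVM (fun i : Fin N => if i = ⟨0, hN⟩ then (1 : Matrix (Fin 2) (Fin 2) ℂ) else 0) ∧
    succProb q v (fun i : Fin N => if i = ⟨0, hN⟩ then (1 : Matrix (Fin 2) (Fin 2) ℂ) else 0)
      = q ⟨0, hN⟩ := by
  set z : Fin N := ⟨0, hN⟩ with hz
  have hpovm : IsPOVM (fun i : Fin N => if i = z then (1 : Matrix (Fin 2) (Fin 2) ℂ) else 0) := by
    constructor
    · intro i
      by_cases h : i = z
      · simp [h, Matrix.PosSemidef.one]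
      · simp [h, Matrix.PosSemidef.zero]
    · simp
  have hval : succProb q v (fun i : Fin N => if i = z then (1 : Matrix (Fin 2) (Fin 2) ℂ) else 0)
      = q z := by
    unfold succProb
    rw [Finset.sum_eq_single z]
    · simp [trace_qubitState]
    · intro b _ hb; simp [hb]
    · simp
  refine ⟨⟨⟨_, hpovm, hval⟩, ?_⟩, hpovm, hval⟩
  rintro x ⟨M, ⟨hMpsd, hMsum⟩, rfl⟩
  have hzle : ∀ i, z ≤ i := fun i => by simp [hz, Fin.le_def]
  have key : ∀ i, q i * (Matrix.trace (qubitState (v i) * M i)).re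
      = q i * (1/2) * ((M i).trace).re + (1/2) * ((blochOp (q z • v z) * M i).trace).re := by
    intro i
    have h1 : blochOp (q z • v z) * M i = (q i : ℂ) • (blochOp (v i) * M i) := by
      rw [← hpt i z, blochOp_smul, smul_mul_assoc]
    rw [trace_qubitState_mul, h1, Matrix.trace_smul]
    simp [re_half_mul, Complex.add_re, smul_eq_mul, Complex.mul_re]
    ring
  have hsum2 : ∑ i, ((blochOp (q z • v z) * M i).trace).re = 0 := by
    rw [← Complex.re_sum, ← Matrix.trace_sum, ← Finset.mul_sum, hMsum, mul_one, trace_blochOp]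
    simp
  have htr2 : ∑ i, ((M i).trace).re = 2 := by
    rw [← Complex.re_sum, ← Matrix.trace_sum, hMsum, trace_one']
    norm_num
  calc succProb q v M
      = ∑ i, (q i * (1/2) * ((M i).trace).re + (1/2) * ((blochOp (q z • v z) * M i).trace).re) := by
        unfold succProb; exact Finset.sum_congr rfl fun i _ => key i
    _ = ∑ i, q i * (1/2) * ((M i).trace).re := by
        rw [Finset.sum_add_distrib, ← Finset.mul_sum, hsum2, mul_zero, add_zero]
    _ ≤ ∑ i, q z * (1/2) * ((M i).trace).re := by
        apply Finset.sum_le_sum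
        intro i _
        apply mul_le_mul_of_nonneg_right
        · exact mul_le_mul_of_nonneg_right (hqa (hzle i)) (by norm_num)
        · exact psd_trace_re_nonneg _ (hMpsd i)
    _ = q z := by
        rw [← Finset.mul_sum, htr2]; ring
end

section
/- Three symmetric qubit states with equal priors: Let v : Fin 3 → EuclideanSpace ℝ (Fin 3) and let R, γ ∈ ℝ with γ < R ≤ 1, such that ⟪v i, v i⟫ = R for all i and ⟪v i, v j⟫ = γ for all i ≠ j. Let q : Fin 3 → ℝ be the constant prior q i = 1/3. Then (1/3) * (1 + Real.sqrt (2*(R − γ)/3)) is the greatest element of the set of success probabilities {P(M) : M a 3-outcome POVM}. -/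
open Matrix Complex Finset RealInnerProductSpace
open scoped ComplexOrder

noncomputable def aM (M : Matrix (Fin 2) (Fin 2) ℂ) : ℝ := ((M 0 0).re + (M 1 1).re) / 2

noncomputable def bv (M : Matrix (Fin 2) (Fin 2) ℂ) : EuclideanSpace ℝ (Fin 3) :=
  WithLp.toLp 2 ![((M 0 1).re + (M 1 0).re) / 2, ((M 1 0).im - (M 0 1).im) / 2, ((M 0 0).re - (M 1 1).re) / 2]

lemma trace_re (v : EuclideanSpace ℝ (Fin 3)) (M : Matrix (Fin 2) (Fin 2) ℂ) :
    (Matrix.trace (qubitState v * M)).re = aM M + ⟪v, bv M⟫ := by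
  simp [aM, bv, PiLp.inner_apply, Fin.sum_univ_three, Matrix.trace, Matrix.mul_apply,
    Fin.sum_univ_two, qubitState, blochOp, pauli1, pauli2, pauli3, Matrix.one_apply,
    Matrix.add_apply, Matrix.smul_apply, Complex.add_re, Complex.mul_re, Complex.mul_im]
  ring

lemma psd_bound {M : Matrix (Fin 2) (Fin 2) ℂ} (hM : M.PosSemidef) : ‖bv M‖ ≤ aM M := by
  have h10 : M 1 0 = star (M 0 1) := (hM.1.apply 1 0).symm
  have key : ∀ z w : ℂ,
      0 ≤ (star z * (M 0 0 * z + M 0 1 * w) + star w * (M 1 0 * z + M 1 1 * w)).re := by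
    intro z w
    have := hM.dotProduct_mulVec_nonneg ![z, w]
    rw [Complex.le_def] at this
    simpa [dotProduct, Matrix.mulVec, Fin.sum_univ_two] using this.1
  set α := (M 0 0).re with hα'
  set δ := (M 1 1).re with hδ'
  set b := M 0 1 with hb'
  have him0 : (M 0 0).im = 0 := by
    have := hM.1.apply 0 0
    rw [Complex.star_def, Complex.conj_eq_iff_im] at this; exact this
  have him1 : (M 1 1).im = 0 := by
    have := hM.1.apply 1 1
    rw [Complex.star_def, Complex.conj_eq_iff_im] at this; exact this
  have hα0 : 0 ≤ α := by simpa [Complex.mul_re, him0] using key 1 0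
  have hδ0 : 0 ≤ δ := by simpa [Complex.mul_re, him1] using key 0 1
  have quad : ∀ t : ℝ, 0 ≤ α * t^2 * (b.re^2 + b.im^2) - 2*t*(b.re^2 + b.im^2) + δ := by
    intro t
    have := key (-(t:ℂ) * b) 1
    rw [h10] at this
    simp only [Complex.add_re, Complex.mul_re, Complex.mul_im, Complex.add_im,
      Complex.ofReal_re, Complex.ofReal_im, Complex.neg_re, Complex.neg_im,
      Complex.one_re, Complex.one_im, RCLike.star_def, Complex.conj_re, Complex.conj_im,
      mul_one, mul_zero, zero_mul, one_mul, zero_sub, sub_zero, add_zero, zero_add,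
      neg_neg, neg_zero, him0] at this
    nlinarith [this]
  have hB : b.re^2 + b.im^2 ≤ α * δ := by
    by_cases hb : b.re^2 + b.im^2 = 0
    · rw [hb]; positivity
    · have hBpos : 0 < b.re^2 + b.im^2 := lt_of_le_of_ne (by positivity) (Ne.symm hb)
      by_cases hz : α = 0
      · exfalso
        have this2 := quad ((δ + 1) / (2 * (b.re^2 + b.im^2)))
        rw [hz] at this2
        have e : (0:ℝ) * ((δ + 1) / (2 * (b.re^2 + b.im^2)))^2 * (b.re^2 + b.im^2)
            - 2*((δ + 1) / (2 * (b.re^2 + b.im^2)))*(b.re^2 + b.im^2) + δ = -1 := by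
          field_simp
          ring
        rw [e] at this2
        linarith
      · have hαpos : 0 < α := lt_of_le_of_ne hα0 (Ne.symm hz)
        have this2 := quad (1/α)
        have e : α * (1/α)^2 * (b.re^2+b.im^2) - 2*(1/α)*(b.re^2+b.im^2) + δ
            = δ - (b.re^2+b.im^2)/α := by field_simp; ring
        rw [e] at this2
        have h3 := (div_le_iff₀ hαpos).mp (by linarith : (b.re^2+b.im^2)/α ≤ δ)
        nlinarith [h3]
  have hnorm : ‖bv M‖ = Real.sqrt (b.re^2 + b.im^2 + ((α - δ)/2)^2) := by
    rw [EuclideanSpace.norm_eq]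
    congr 1
    have h1 : (star b).re = b.re := rfl
    have h2 : (star b).im = -b.im := rfl
    simp [bv, Fin.sum_univ_three, h10, h1, h2, Real.norm_eq_abs, _root_.sq_abs]
    ring
  rw [hnorm]
  have haM : aM M = (α + δ)/2 := rfl
  rw [haM]
  rw [show (α+δ)/2 = Real.sqrt (((α+δ)/2)^2) by rw [Real.sqrt_sq (by positivity)]]
  apply Real.sqrt_le_sqrt
  nlinarith [hB]

lemma blochOp_add (x y : EuclideanSpace ℝ (Fin 3)) :
    blochOp (x + y) = blochOp x + blochOp y := by
  simp only [blochOp, PiLp.add_apply, Complex.ofReal_add, add_smul]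
  abel

lemma blochOp_zero : blochOp 0 = 0 := by
  simp [blochOp]

lemma blochOp_sq (w : EuclideanSpace ℝ (Fin 3)) :
    blochOp w * blochOp w = (((w 0)^2 + (w 1)^2 + (w 2)^2 : ℝ) : ℂ) • 1 := by
  ext i j
  fin_cases i <;> fin_cases j <;>
    · simp [blochOp, pauli1, pauli2, pauli3, Matrix.mul_apply, Fin.sum_univ_two,
        Matrix.one_apply, Complex.ext_iff, ← Complex.ofReal_pow]
      constructor <;> ring

lemma one_add_herm (w : EuclideanSpace ℝ (Fin 3)) :
    (1 + blochOp w)ᴴ = 1 + blochOp w := by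
  ext i j
  fin_cases i <;> fin_cases j <;>
    simp [blochOp, pauli1, pauli2, pauli3, Matrix.conjTranspose_apply, Matrix.one_apply,
      Complex.ext_iff]

lemma opt_psd (w : EuclideanSpace ℝ (Fin 3)) (hw : ‖w‖ = 1) :
    ((1/3 : ℂ) • (1 + blochOp w)).PosSemidef := by
  have hw2 : (w 0)^2 + (w 1)^2 + (w 2)^2 = 1 := by
    have := EuclideanSpace.norm_eq w
    rw [hw] at this
    have h2 : (∑ i : Fin 3, ‖w i‖^2) = 1 := Real.sqrt_eq_one.mp this.symm
    simpa [Fin.sum_univ_three, Real.norm_eq_abs, _root_.sq_abs] using h2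
  have hsq : (1 + blochOp w) * (1 + blochOp w) = (2:ℂ) • (1 + blochOp w) := by
    rw [add_mul, mul_add, mul_add, blochOp_sq, hw2, one_mul, mul_one]
    have h1 : (((1:ℝ)):ℂ) • (1 : Matrix (Fin 2) (Fin 2) ℂ) = 1 := by norm_num
    rw [h1, one_mul, two_smul]
    abel
  set B := (((Real.sqrt 6)⁻¹ : ℝ) : ℂ) • (1 + blochOp w) with hB
  have key : (1/3 : ℂ) • (1 + blochOp w) = Bᴴ * B := by
    rw [hB, Matrix.conjTranspose_smul, one_add_herm, Matrix.smul_mul, Matrix.mul_smul,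
      hsq, smul_smul, smul_smul]
    congr 1
    have h6 : (Real.sqrt 6) ^ 2 = 6 := Real.sq_sqrt (by norm_num)
    have hstar : star (((Real.sqrt 6)⁻¹ : ℝ) : ℂ) = (((Real.sqrt 6)⁻¹ : ℝ) : ℂ) := by
      simp [Complex.conj_ofReal]
    rw [hstar]
    push_cast
    rw [show ((Real.sqrt 6 : ℂ))⁻¹ * (Real.sqrt 6 : ℂ)⁻¹ * 2 = 2 / ((Real.sqrt 6:ℂ))^2 by ring]
    rw [show ((Real.sqrt 6 : ℂ))^2 = ((Real.sqrt 6 ^ 2 : ℝ) : ℂ) by push_cast; ring, h6]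
    norm_num
  rw [key]
  exact Matrix.posSemidef_conjTranspose_mul_self B

lemma trace_opt (v w : EuclideanSpace ℝ (Fin 3)) :
    (Matrix.trace (qubitState v * ((1/3 : ℂ) • (1 + blochOp w)))).re
      = 1/3 + (1/3) * ⟪v, w⟫ := by
  simp [PiLp.inner_apply, Fin.sum_univ_three, Matrix.trace, Matrix.mul_apply,
    Fin.sum_univ_two, qubitState, blochOp, pauli1, pauli2, pauli3, Matrix.one_apply,
    Matrix.add_apply, Matrix.smul_apply, Complex.add_re, Complex.mul_re, Complex.mul_im]
  ring

/-- Three symmetric qubit states with equal priors: the guessing probability is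
`(1/3) (1 + √(2(R - γ)/3))`. -/
theorem three_symmetric_states
    (v : Fin 3 → EuclideanSpace ℝ (Fin 3)) (R γ : ℝ)
    (hγR : γ < R) (hR : R ≤ 1)
    (hvv : ∀ i, ⟪v i, v i⟫ = R)
    (hvij : ∀ i j, i ≠ j → ⟪v i, v j⟫ = γ) :
    IsGreatest {x | ∃ M : Fin 3 → Matrix (Fin 2) (Fin 2) ℂ,
        IsPOVM M ∧ succProb (fun _ => 1 / 3) v M = x}
      ((1 / 3) * (1 + Real.sqrt (2 * (R - γ) / 3))) := by
  have hRγ : 0 < R - γ := sub_pos.mpr hγR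
  set s := Real.sqrt (2 * (R - γ) / 3) with hs
  have hs2 : s^2 = 2*(R-γ)/3 := Real.sq_sqrt (by linarith)
  have hspos : 0 < s := Real.sqrt_pos.mpr (by linarith)
  set c : EuclideanSpace ℝ (Fin 3) := (3:ℝ)⁻¹ • (v 0 + v 1 + v 2) with hc
  have einner : ∀ i j : Fin 3, ⟪v i, v j⟫ = if i = j then R else γ := by
    intro i j
    by_cases h : i = j
    · simp [h, fun k => (real_inner_self_eq_norm_sq (v k)).symm.trans (hvv k)]
    · simp [h, hvij i j h]
  have hvc : ∀ i, ⟪v i, c⟫ = (R + 2*γ)/3 := by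
    intro i
    rw [hc, real_inner_smul_right, inner_add_right, inner_add_right]
    fin_cases i <;> simp [einner, fun k => (real_inner_self_eq_norm_sq (v k)).symm.trans (hvv k)] <;> ring
  have hcc : ⟪c, c⟫ = (R + 2*γ)/3 := by
    rw [hc, real_inner_smul_left, inner_add_left, inner_add_left, hvc 0, hvc 1, hvc 2]
    ring
  set u : Fin 3 → EuclideanSpace ℝ (Fin 3) := fun i => v i - c with hu
  have huu : ∀ i, ⟪u i, u i⟫ = s^2 := by
    intro i
    have : ⟪u i, u i⟫ = ⟪v i, v i⟫ - 2*⟪v i, c⟫ + ⟪c, c⟫ := by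
      simp only [hu]
      rw [inner_sub_left, inner_sub_right, inner_sub_right, real_inner_comm c (v i)]
      ring
    rw [this, hvv i, hvc i, hcc, hs2]
    ring
  have hnormu : ∀ i, ‖u i‖ = s := by
    intro i
    have h1 : ‖u i‖^2 = s^2 := by rw [← real_inner_self_eq_norm_sq, huu i]
    rw [← Real.sqrt_sq (norm_nonneg (u i)), h1, Real.sqrt_sq hspos.le]
  have huv : ∀ i, ⟪v i, u i⟫ = s^2 := by
    intro i
    simp only [hu]
    rw [inner_sub_right, hvv i, hvc i, hs2]
    ring
  have hsumu : u 0 + u 1 + u 2 = 0 := by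
    simp only [hu, hc]
    module
  constructor
  · -- membership: the optimal POVM
    set w : Fin 3 → EuclideanSpace ℝ (Fin 3) := fun i => (s⁻¹ : ℝ) • u i with hw
    have hwnorm : ∀ i, ‖w i‖ = 1 := by
      intro i
      simp only [hw]
      rw [norm_smul, hnormu i, Real.norm_eq_abs, abs_of_pos (inv_pos.mpr hspos),
        inv_mul_cancel₀ hspos.ne']
    refine ⟨fun i => (1/3 : ℂ) • (1 + blochOp (w i)), ⟨fun i => opt_psd (w i) (hwnorm i), ?_⟩, ?_⟩
    · rw [Fin.sum_univ_three]
      have hw0 : w 0 + w 1 + w 2 = 0 := by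
        simp only [hw]
        rw [← smul_add, ← smul_add, hsumu, smul_zero]
      have hBsum : blochOp (w 0) + blochOp (w 1) + blochOp (w 2) = 0 := by
        rw [← blochOp_add, ← blochOp_add, hw0, blochOp_zero]
      have e : (1/3 : ℂ) • (1 + blochOp (w 0)) + (1/3 : ℂ) • (1 + blochOp (w 1))
            + (1/3 : ℂ) • (1 + blochOp (w 2))
          = 1 + (1/3 : ℂ) • (blochOp (w 0) + blochOp (w 1) + blochOp (w 2)) := by
        module
      rw [e, hBsum, smul_zero, add_zero]
    · simp only [succProb, Fin.sum_univ_three]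
      rw [trace_opt, trace_opt, trace_opt]
      have hvw : ∀ i, ⟪v i, w i⟫ = s := by
        intro i
        simp only [hw]
        rw [real_inner_smul_right, huv i, pow_two, ← mul_assoc,
          inv_mul_cancel₀ hspos.ne', one_mul]
      rw [hvw 0, hvw 1, hvw 2]
      ring
  · -- upper bound
    rintro x ⟨M, ⟨hpsd, hsum⟩, rfl⟩
    simp only [succProb, Fin.sum_univ_three]
    rw [trace_re, trace_re, trace_re]
    rw [Fin.sum_univ_three] at hsum
    have h00 := congrArg Complex.re (congrFun (congrFun hsum 0) 0)
    have h11 := congrArg Complex.re (congrFun (congrFun hsum 1) 1)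
    have h01 := congrFun (congrFun hsum 0) 1
    have h10 := congrFun (congrFun hsum 1) 0
    have h01r := congrArg Complex.re h01
    have h01i := congrArg Complex.im h01
    have h10r := congrArg Complex.re h10
    have h10i := congrArg Complex.im h10
    simp [Matrix.add_apply, Matrix.one_apply] at h00 h11
    simp only [Matrix.add_apply, Matrix.one_apply, Complex.add_re, Complex.add_im,
      show ((0:Fin 2) = 1) = False by simp, show ((1:Fin 2) = 0) = False by simp,
      if_false, Complex.zero_re, Complex.zero_im] at h01r h01i h10r h10i
    have hA : aM (M 0) + aM (M 1) + aM (M 2) = 1 := by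
      simp only [aM]
      linarith [h00, h11]
    have hb : bv (M 0) + bv (M 1) + bv (M 2) = 0 := by
      ext i
      fin_cases i <;>
        · show _ = (0 : EuclideanSpace ℝ (Fin 3)) _
          simp [PiLp.add_apply, bv]
          linarith [h00, h11, h01r, h01i, h10r, h10i]
    have hkey : ∀ i, ⟪v i, bv (M i)⟫ ≤ s * aM (M i) + ⟪c, bv (M i)⟫ := by
      intro i
      have hvi : v i = u i + c := by simp [hu]
      have h1 : ⟪v i, bv (M i)⟫ = ⟪u i, bv (M i)⟫ + ⟪c, bv (M i)⟫ := by
        rw [hvi, inner_add_left]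
      have h2 : ⟪u i, bv (M i)⟫ ≤ ‖u i‖ * ‖bv (M i)‖ := real_inner_le_norm _ _
      rw [hnormu i] at h2
      have h3 := psd_bound (hpsd i)
      have h4 : s * ‖bv (M i)‖ ≤ s * aM (M i) :=
        mul_le_mul_of_nonneg_left h3 hspos.le
      linarith
    have hc0 : ⟪c, bv (M 0)⟫ + ⟪c, bv (M 1)⟫ + ⟪c, bv (M 2)⟫ = 0 := by
      rw [← inner_add_right, ← inner_add_right, hb, inner_zero_right]
    have hsA : s * aM (M 0) + s * aM (M 1) + s * aM (M 2) = s := by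
      rw [← mul_add, ← mul_add, hA, mul_one]
    linarith [hkey 0, hkey 1, hkey 2, hA, hc0, hsA]
end
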